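/- arXiv:2206.02068 — 2 statements merged into one kernel-verified Lean document; each statement's English description precedes it below -/
import Mathlib

section
/- Let P be a nonempty countable family of probability distributions on ℕ, each with all components positive. Then BS(P) = ⋂_{p ∈ P} BS(p) is of second Baire category (i.e., not meagre) in S, where S carries the subspace topology induced by the ℓ¹-norm. -/
/-- The set of probability distributions on `ℕ`, as a subset of the Banach space `ℓ¹`. -/
def S : Set (lp (fun _ : ℕ => ℝ) 1) :=
  {q | (∀ i, 0 ≤ q i) ∧ HasSum (fun i => q i) 1}

/-- The Bayes blind spot of `p`, as a subset of `S` (with its ℓ¹-subspace topology). -/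
def BS (p : ℕ → ℝ) : Set S := {q | Function.Injective fun i => q.1 i / p i}

open Set Metric Filter

noncomputable section BBSaux

/-- Coordinate evaluation is 1-Lipschitz on `ℓ¹`. -/
lemma bbs_coord_lip (i : ℕ) : LipschitzWith 1 (fun q : lp (fun _ : ℕ => ℝ) 1 => q i) := by
  apply LipschitzWith.of_dist_le_mul
  intro q r
  have h := lp.norm_apply_le_norm (p := 1) one_ne_zero (q - r) i
  simpa [dist_eq_norm, lp.coeFn_sub] using h

lemma bbs_summable (q : lp (fun _ : ℕ => ℝ) 1) : Summable fun i => ‖q i‖ := by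
  have h := (lp.memℓp q).summable (p := 1) (by norm_num)
  simpa using h

lemma bbs_norm_eq (q : lp (fun _ : ℕ => ℝ) 1) : ‖q‖ = ∑' i, ‖q i‖ := by
  have h := lp.norm_eq_tsum_rpow (p := 1) (by norm_num) q
  simpa using h

/-- The total-sum functional is 1-Lipschitz on `ℓ¹`. -/
lemma bbs_tsum_lip : LipschitzWith 1 (fun q : lp (fun _ : ℕ => ℝ) 1 => ∑' i, q i) := by
  apply LipschitzWith.of_dist_le_mul
  intro q r
  have hq : Summable fun i => q i := (bbs_summable q).of_norm
  have hr : Summable fun i => r i := (bbs_summable r).of_norm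
  have h1 : (∑' i, q i) - (∑' i, r i) = ∑' i, (q i - r i) := (Summable.tsum_sub hq hr).symm
  have h2 : |∑' i, (q i - r i)| ≤ ∑' i, |q i - r i| := by
    have := norm_tsum_le_tsum_norm (f := fun i => q i - r i) (by
      simpa [Real.norm_eq_abs] using
        (bbs_summable (q - r)).congr (fun i => by simp [lp.coeFn_sub, Real.norm_eq_abs]))
    simpa [Real.norm_eq_abs] using this
  have h3 : ∑' i, |q i - r i| = ‖q - r‖ := by
    rw [bbs_norm_eq (q - r)]
    exact tsum_congr fun i => by simp [lp.coeFn_sub, Real.norm_eq_abs]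
  calc dist (∑' i, q i) (∑' i, r i) = |(∑' i, q i) - (∑' i, r i)| := rfl
    _ = |∑' i, (q i - r i)| := by rw [h1]
    _ ≤ ∑' i, |q i - r i| := h2
    _ = ‖q - r‖ := h3
    _ = 1 * dist q r := by rw [one_mul, dist_eq_norm]

lemma bbs_isClosed_S : IsClosed S := by
  have h1 : IsClosed {q : lp (fun _ : ℕ => ℝ) 1 | ∀ i, 0 ≤ q i} := by
    have : {q : lp (fun _ : ℕ => ℝ) 1 | ∀ i, 0 ≤ q i}
        = ⋂ i, {q : lp (fun _ : ℕ => ℝ) 1 | 0 ≤ q i} := by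
      ext q; simp
    rw [this]
    exact isClosed_iInter fun i =>
      isClosed_le continuous_const (bbs_coord_lip i).continuous
  have h2 : IsClosed {q : lp (fun _ : ℕ => ℝ) 1 | HasSum (fun i => q i) 1} := by
    have heq : {q : lp (fun _ : ℕ => ℝ) 1 | HasSum (fun i => q i) 1}
        = (fun q : lp (fun _ : ℕ => ℝ) 1 => ∑' i, q i) ⁻¹' {1} := by
      ext q
      have hq : Summable fun i => q i := (bbs_summable q).of_norm
      simp [hq.hasSum_iff]
    rw [heq]
    exact IsClosed.preimage bbs_tsum_lip.continuous isClosed_singleton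
  have : S = {q : lp (fun _ : ℕ => ℝ) 1 | ∀ i, 0 ≤ q i}
      ∩ {q : lp (fun _ : ℕ => ℝ) 1 | HasSum (fun i => q i) 1} := rfl
  rw [this]
  exact h1.inter h2

instance : CompleteSpace ↥S := bbs_isClosed_S.completeSpace_coe

/-- The coefficient function of `lp.single`. -/
lemma bbs_single_coe (i : ℕ) (c : ℝ) :
    ∀ j, (lp.single (E := fun _ : ℕ => ℝ) 1 i c) j = if j = i then c else 0 := by
  intro j
  by_cases h : j = i
  · subst h; simp [lp.single_apply_self]
  · simp [lp.single_apply_ne _ _ _ h, h]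

/-- Perturbation: move mass `δ` from coordinate `a` to coordinate `b`. -/
lemma bbs_perturb (q : ↥S) (a b : ℕ) (hab : a ≠ b) (δ : ℝ) (hδ0 : 0 < δ)
    (hδa : δ ≤ q.1 a) :
    ∃ q' : ↥S, dist q' q ≤ 2 * δ ∧ q'.1 a = q.1 a - δ ∧ q'.1 b = q.1 b + δ ∧
      ∀ k, k ≠ a → k ≠ b → q'.1 k = q.1 k := by
  classical
  set u : lp (fun _ : ℕ => ℝ) 1 :=
    δ • lp.single (E := fun _ : ℕ => ℝ) 1 b 1 - δ • lp.single (E := fun _ : ℕ => ℝ) 1 a 1 with hu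
  have hu_apply : ∀ k, u k = (if k = b then δ else 0) - (if k = a then δ else 0) := by
    intro k
    rw [hu]
    rw [lp.coeFn_sub]
    simp only [Pi.sub_apply]
    rw [lp.coeFn_smul, lp.coeFn_smul]
    simp only [Pi.smul_apply, smul_eq_mul]
    rw [bbs_single_coe, bbs_single_coe]
    by_cases h1 : k = b <;> by_cases h2 : k = a <;> simp [h1, h2]
  set v : lp (fun _ : ℕ => ℝ) 1 := q.1 + u with hv
  have hv_apply : ∀ k, v k = q.1 k + ((if k = b then δ else 0) - (if k = a then δ else 0)) := by
    intro k
    rw [hv, lp.coeFn_add]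
    simp only [Pi.add_apply]
    rw [hu_apply]
  have hva : v a = q.1 a - δ := by rw [hv_apply, if_neg hab, if_pos rfl]; ring
  have hvb : v b = q.1 b + δ := by rw [hv_apply, if_pos rfl, if_neg (Ne.symm hab)]; ring
  have hvk : ∀ k, k ≠ a → k ≠ b → v k = q.1 k := by
    intro k hka hkb; rw [hv_apply]; simp [hka, hkb]
  have hmem : v ∈ S := by
    constructor
    · intro k
      by_cases hka : k = a
      · subst hka; rw [hva]; linarith
      · by_cases hkb : k = b
        · subst hkb; rw [hvb]; have := q.2.1 k; linarith
        · rw [hvk k hka hkb]; exact q.2.1 k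
    · have hqsum : HasSum (fun i => q.1 i) 1 := q.2.2
      have husum : HasSum (fun i => u i) 0 := by
        have hb : HasSum (fun k => if k = b then δ else 0) δ := hasSum_ite_eq b δ
        have ha : HasSum (fun k => if k = a then δ else 0) δ := hasSum_ite_eq a δ
        have := hb.sub ha
        simp only [sub_self] at this
        exact this.congr_fun fun k => hu_apply k
      have := hqsum.add husum
      rw [add_zero] at this
      exact this.congr_fun fun k => by rw [hv_apply, hu_apply]
  refine ⟨⟨v, hmem⟩, ?_, hva, hvb, hvk⟩
  have hns : ∀ (i : ℕ), ‖lp.single (E := fun _ : ℕ => ℝ) 1 i (1 : ℝ)‖ = 1 := by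
    intro i
    have := lp.norm_single (E := fun _ : ℕ => ℝ) (p := 1) (by norm_num)
      i (1 : ℝ)
    simpa using this
  have hd : dist (⟨v, hmem⟩ : ↥S) q = ‖u‖ := by
    rw [Subtype.dist_eq, dist_eq_norm]
    show ‖v - q.1‖ = ‖u‖
    rw [hv]
    congr 1
    abel
  rw [hd]
  calc ‖u‖ ≤ ‖δ • lp.single (E := fun _ : ℕ => ℝ) 1 b 1‖
        + ‖δ • lp.single (E := fun _ : ℕ => ℝ) 1 a 1‖ := norm_sub_le _ _
    _ = |δ| * 1 + |δ| * 1 := by rw [norm_smul, norm_smul, hns a, hns b]; simp [Real.norm_eq_abs]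
    _ = 2 * δ := by rw [abs_of_pos hδ0]; ring

/-- The "coincidence" set for coordinates `i ≠ j`. -/
def bbsC (p : ℕ → ℝ) (i j : ℕ) : Set ↥S := {q | q.1 i * p j = q.1 j * p i}

lemma bbsC_nowhereDense (p : ℕ → ℝ) (hp : ∀ i, 0 < p i) (i j : ℕ) (hij : i ≠ j) :
    IsNowhereDense (bbsC p i j) := by
  have hcont : Continuous fun q : ↥S => q.1 i * p j - q.1 j * p i := by
    have h1 : Continuous fun q : ↥S => q.1 i :=
      (bbs_coord_lip i).continuous.comp continuous_subtype_val
    have h2 : Continuous fun q : ↥S => q.1 j :=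
      (bbs_coord_lip j).continuous.comp continuous_subtype_val
    exact ((h1.mul continuous_const).sub (h2.mul continuous_const))
  have hclosed : IsClosed (bbsC p i j) := by
    have : bbsC p i j = (fun q : ↥S => q.1 i * p j - q.1 j * p i) ⁻¹' {0} := by
      ext q; simp [bbsC, sub_eq_zero]
    rw [this]
    exact IsClosed.preimage hcont isClosed_singleton
  rw [hclosed.isNowhereDense_iff]
  rw [Set.eq_empty_iff_forall_notMem]
  intro q hq
  obtain ⟨ε, hε, hball⟩ := Metric.mem_nhds_iff.mp (mem_interior_iff_mem_nhds.mp hq)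
  have hqC : q.1 i * p j = q.1 j * p i := by
    have h : q ∈ bbsC p i j := interior_subset hq
    exact h
  -- find a coordinate with positive mass and a suitable perturbation
  have key : ∃ (a b : ℕ), a ≠ b ∧ 0 < q.1 a ∧
      ∀ q' : ↥S, q'.1 a = q.1 a - min (q.1 a) (ε / 3) →
        q'.1 b = q.1 b + min (q.1 a) (ε / 3) →
        (∀ k, k ≠ a → k ≠ b → q'.1 k = q.1 k) → q' ∉ bbsC p i j := by
    by_cases hi : 0 < q.1 i
    · refine ⟨i, j, hij, hi, ?_⟩
      intro q' ha hb _ hmem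
      set δ := min (q.1 i) (ε / 3) with hδ
      have hδ0 : 0 < δ := lt_min hi (by linarith)
      have : (q.1 i - δ) * p j = (q.1 j + δ) * p i := by rw [← ha, ← hb]; exact hmem
      have hpi := hp i; have hpj := hp j
      nlinarith [hqC]
    · by_cases hj : 0 < q.1 j
      · refine ⟨j, i, hij.symm, hj, ?_⟩
        intro q' ha hb _ hmem
        set δ := min (q.1 j) (ε / 3) with hδ
        have hδ0 : 0 < δ := lt_min hj (by linarith)
        have : (q.1 i + δ) * p j = (q.1 j - δ) * p i := by rw [← ha, ← hb]; exact hmem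
        have hpi := hp i; have hpj := hp j
        nlinarith [hqC]
      · -- q i = q j = 0; find a with q a > 0
        have hi0 : q.1 i = 0 := le_antisymm (not_lt.mp hi) (q.2.1 i)
        have hj0 : q.1 j = 0 := le_antisymm (not_lt.mp hj) (q.2.1 j)
        have hex : ∃ a, 0 < q.1 a := by
          by_contra hcon
          push_neg at hcon
          have hz : ∀ a, q.1 a = 0 := fun a => le_antisymm (hcon a) (q.2.1 a)
          have := q.2.2
          rw [show (fun k => q.1 k) = (fun _ => (0 : ℝ)) from funext hz] at this
          exact one_ne_zero (this.unique hasSum_zero)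
        obtain ⟨a, ha⟩ := hex
        have hai : a ≠ i := fun h => by rw [h, hi0] at ha; exact lt_irrefl 0 ha
        have haj : a ≠ j := fun h => by rw [h, hj0] at ha; exact lt_irrefl 0 ha
        refine ⟨a, i, hai, ha, ?_⟩
        intro q' ha' hb' hk hmem
        set δ := min (q.1 a) (ε / 3) with hδ
        have hδ0 : 0 < δ := lt_min ha (by linarith)
        have h1 : q'.1 i = δ := by rw [hb', hi0, zero_add]
        have h2 : q'.1 j = 0 := by rw [hk j haj.symm hij.symm, hj0]
        have : q'.1 i * p j = q'.1 j * p i := hmem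
        rw [h1, h2, zero_mul] at this
        have hpj := hp j
        nlinarith
  obtain ⟨a, b, hab, ha, hnot⟩ := key
  set δ := min (q.1 a) (ε / 3) with hδ
  have hδ0 : 0 < δ := lt_min ha (by linarith)
  have hδa : δ ≤ q.1 a := min_le_left _ _
  obtain ⟨q', hdist, h1, h2, h3⟩ := bbs_perturb q a b hab δ hδ0 hδa
  have hq'ball : q' ∈ Metric.ball q ε := by
    rw [Metric.mem_ball]
    have : δ ≤ ε / 3 := min_le_right _ _
    calc dist q' q ≤ 2 * δ := hdist
      _ ≤ 2 * (ε / 3) := by linarith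
      _ < ε := by linarith
  exact hnot q' h1 h2 h3 (hball hq'ball)

/-- For each valid `p`, the Bayes blind spot `BS p` is residual. -/
lemma bbs_residual (p : ℕ → ℝ) (hp : ∀ i, 0 < p i) : BS p ∈ residual ↥S := by
  have hmeagre : IsMeagre (BS p)ᶜ := by
    rw [isMeagre_iff_countable_union_isNowhereDense]
    refine ⟨(fun ij : ℕ × ℕ => bbsC p ij.1 ij.2) '' {ij | ij.1 ≠ ij.2},
      ?_, Set.Countable.image (Set.to_countable _) _, ?_⟩
    · rintro t ⟨ij, hij, rfl⟩
      exact bbsC_nowhereDense p hp ij.1 ij.2 hij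
    · intro q hq
      simp only [BS, Set.mem_compl_iff, Set.mem_setOf_eq, Function.Injective] at hq
      push_neg at hq
      obtain ⟨i, j, hdiv, hij⟩ := hq
      have hC : q ∈ bbsC p i j := by
        have hpi := (hp i).ne'
        have hpj := (hp j).ne'
        exact (div_eq_div_iff hpi hpj).mp hdiv
      exact ⟨bbsC p i j, ⟨(i, j), hij, rfl⟩, hC⟩
  rw [IsMeagre, compl_compl] at hmeagre
  exact hmeagre

end BBSaux

/-- For a nonempty countable family `P` of probability distributions
on `ℕ`, each with all components positive, `BS(P) = ⋂_{p ∈ P} BS(p)` is of second Baire category (not meagre) in `S`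
for the ℓ¹-subspace topology. -/
theorem bayes_blind_spot_inter_stmt11 (P : Set (ℕ → ℝ))
    (hPne : P.Nonempty) (hPcount : P.Countable)
    (hPpos : ∀ p ∈ P, ∀ i, 0 < p i) (hPsum : ∀ p ∈ P, HasSum p 1) :
    ¬ IsMeagre (⋂ p ∈ P, BS p) := by
  intro hmeagre
  -- S is nonempty
  obtain ⟨p0, hp0⟩ := hPne
  have hmem : Memℓp p0 1 := by
    apply memℓp_gen
    have : Summable p0 := (hPsum p0 hp0).summable
    have heq : (fun i => ‖p0 i‖ ^ (1 : ENNReal).toReal) = p0 := by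
      funext i
      simp [Real.norm_eq_abs, abs_of_pos (hPpos p0 hp0 i)]
    rw [heq]
    exact this
  have hSne : Nonempty ↥S := by
    refine ⟨⟨⟨p0, hmem⟩, ?_, ?_⟩⟩
    · intro i; exact (hPpos p0 hp0 i).le
    · exact hPsum p0 hp0
  -- The intersection is residual
  have hres : (⋂ p ∈ P, BS p) ∈ residual ↥S :=
    (countable_bInter_mem hPcount).mpr fun p hp => bbs_residual p (hPpos p hp)
  -- meagre and residual together give a dense empty set
  have h0 : (⋂ p ∈ P, BS p) ∩ (⋂ p ∈ P, BS p)ᶜ ∈ residual ↥S :=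
    Filter.inter_mem hres hmeagre
  rw [Set.inter_compl_self] at h0
  have hdense : Dense (∅ : Set ↥S) := dense_of_mem_residual h0
  obtain ⟨x, hx⟩ := hdense.nonempty
  exact hx
end

section
/- Let r be a real number with 1 ≤ r. Then for every probability distribution p on ℕ with p_i > 0 for all i, with S given the subspace topology induced by the ℓ^r-norm (‖s‖_r = (∑_i |s_i|^r)^{1/r}), the Bayes blind spot BS(p) is of second Baire category in S, is dense in S, and has empty interior in S. -/
/-- The set of probability distributions on `ℕ`, as a subset of the space `ℓʳ`. -/
def Sr (r : ENNReal) : Set (lp (fun _ : ℕ => ℝ) r) :=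
  {q | (∀ i, 0 ≤ q i) ∧ HasSum (fun i => q i) 1}

/-- The Bayes blind spot of `p`, as a subset of `Sr r` (with its ℓʳ-subspace topology). -/
def BSr (r : ENNReal) (p : ℕ → ℝ) : Set (Sr r) :=
  {q | Function.Injective fun i => q.1 i / p i}

open Filter Topology Metric
open scoped ENNReal

set_option synthInstance.maxHeartbeats 1000000
set_option maxHeartbeats 1000000

namespace BayesAux

private lemma abs_sub_eq_min (a b : ℝ) : |a - b| = a + b - 2 * min a b := by
  rcases le_total a b with h | h
  · rw [min_eq_left h, abs_of_nonpos (by linarith)]; ring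
  · rw [min_eq_right h, abs_of_nonneg (by linarith)]; ring

/-- Scheffé's lemma for series. -/
lemma scheffe {F : ℕ → ℕ → ℝ} {q : ℕ → ℝ}
    (hF0 : ∀ n i, 0 ≤ F n i) (hF1 : ∀ n, HasSum (F n) 1)
    (hq0 : ∀ i, 0 ≤ q i) (hq1 : HasSum q 1)
    (hpt : ∀ i, Tendsto (F · i) atTop (𝓝 (q i))) :
    Tendsto (fun n => ∑' i, |F n i - q i|) atTop (𝓝 0) := by
  have hqs : Summable q := hq1.summable
  have hmin : Tendsto (fun n => ∑' i, min (F n i) (q i)) atTop (𝓝 (∑' i, q i)) := by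
    refine tendsto_tsum_of_dominated_convergence (f := fun n i => min (F n i) (q i))
      (g := q) (bound := q) hqs
      (fun i => by simpa [min_self] using ((hpt i).min (tendsto_const_nhds (x := q i))))
      (Eventually.of_forall fun n i => ?_)
    rw [Real.norm_eq_abs, abs_of_nonneg (le_min (hF0 n i) (hq0 i))]
    exact min_le_right _ _
  have hq_tsum : ∑' i, q i = 1 := hq1.tsum_eq
  have key : ∀ n, ∑' i, |F n i - q i| = 2 - 2 * ∑' i, min (F n i) (q i) := by
    intro n
    have hFs : Summable (F n) := (hF1 n).summable
    have hmins : Summable fun i => min (F n i) (q i) :=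
      Summable.of_nonneg_of_le (fun i => le_min (hF0 n i) (hq0 i))
        (fun i => min_le_right _ _) hqs
    have h1 : (fun i => |F n i - q i|) = fun i => (F n i + q i) - 2 * min (F n i) (q i) := by
      funext i; exact abs_sub_eq_min _ _
    rw [h1, Summable.tsum_sub (hFs.add hqs) (hmins.mul_left 2), Summable.tsum_add hFs hqs,
      (hF1 n).tsum_eq, hq_tsum, tsum_mul_left]
    ring
  simp only [key]
  rw [hq_tsum] at hmin
  have h2 : Tendsto (fun n => 2 - 2 * ∑' i, min (F n i) (q i)) atTop (𝓝 (2 - 2 * 1)) :=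
    tendsto_const_nhds.sub (hmin.const_mul 2)
  simpa using h2

lemma continuous_eval {P : ℝ≥0∞} [Fact (1 ≤ P)] (i : ℕ) :
    Continuous fun f : lp (fun _ : ℕ => ℝ) P => f i := by
  have hP : P ≠ 0 := (zero_lt_one.trans_le (Fact.out : 1 ≤ P)).ne'
  have hL : LipschitzWith 1 fun f : lp (fun _ : ℕ => ℝ) P => f i := by
    apply LipschitzWith.of_dist_le_mul
    intro f g
    rw [NNReal.coe_one, one_mul, dist_eq_norm, dist_eq_norm]
    simpa [lp.coeFn_sub] using lp.norm_apply_le_norm hP (f - g) i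
  exact hL.continuous

lemma memℓp_of_S {R : ℝ≥0∞} (hR : 1 ≤ R) {f : ℕ → ℝ} (_h0 : ∀ i, 0 ≤ f i)
    (h1 : HasSum f 1) : Memℓp f R := by
  have h : Memℓp f 1 := by
    apply memℓp_gen
    simpa [Real.rpow_one] using h1.summable.abs
  exact h.of_exponent_ge hR

/-- Build an element of `Sr R` from a probability distribution on `ℕ`. -/
noncomputable def mkS {R : ℝ≥0∞} (hR : 1 ≤ R) (f : ℕ → ℝ) (h0 : ∀ i, 0 ≤ f i)
    (h1 : HasSum f 1) : Sr R :=
  ⟨⟨f, memℓp_of_S hR h0 h1⟩, h0, h1⟩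

lemma norm_lp_one (f : lp (fun _ : ℕ => ℝ) 1) : ‖f‖ = ∑' i, |f i| := by
  have := lp.norm_eq_tsum_rpow (p := 1) (by norm_num) f
  simpa [Real.rpow_one, Real.norm_eq_abs] using this

lemma le_one_of_S {f : ℕ → ℝ} (h0 : ∀ i, 0 ≤ f i) (h1 : HasSum f 1) (i : ℕ) : f i ≤ 1 :=
  le_hasSum h1 i fun j _ => h0 j

lemma norm_le_rpow {r : ℝ} (hr : 1 ≤ r)
    (f g : lp (fun _ : ℕ => ℝ) (ENNReal.ofReal r))
    (hb : ∀ i, |f i - g i| ≤ 1) (hs : Summable fun i => |f i - g i|) :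
    ‖f - g‖ ≤ (∑' i, |f i - g i|) ^ (1 / r) := by
  have hr0 : (0:ℝ) < r := lt_of_lt_of_le zero_lt_one hr
  have htR : (ENNReal.ofReal r).toReal = r := ENNReal.toReal_ofReal hr0.le
  have hpos : 0 < (ENNReal.ofReal r).toReal := by rw [htR]; exact hr0
  rw [lp.norm_eq_tsum_rpow hpos, htR]
  have hcoords : ∀ i, ‖(f - g) i‖ = |f i - g i| := by
    intro i; rw [lp.coeFn_sub]; simp [Real.norm_eq_abs]
  have hle : ∀ i, ‖(f - g) i‖ ^ r ≤ |f i - g i| := by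
    intro i
    rw [hcoords i]
    rcases eq_or_lt_of_le (abs_nonneg (f i - g i)) with h | h
    · rw [← h, Real.zero_rpow hr0.ne']
    · calc |f i - g i| ^ r ≤ |f i - g i| ^ (1:ℝ) :=
            Real.rpow_le_rpow_of_exponent_ge h (hb i) hr
        _ = |f i - g i| := Real.rpow_one _
  have hsr : Summable fun i => ‖(f - g) i‖ ^ r :=
    Summable.of_nonneg_of_le (fun i => Real.rpow_nonneg (norm_nonneg _) r) hle hs
  have h1 : ∑' i, ‖(f - g) i‖ ^ r ≤ ∑' i, |f i - g i| := Summable.tsum_le_tsum hle hsr hs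
  exact Real.rpow_le_rpow (tsum_nonneg fun i => Real.rpow_nonneg (norm_nonneg _) r) h1
    (by positivity)

/-- Surgery on two coordinates of a distribution. -/
lemma surgery {r : ℝ} (hr : 1 ≤ r) [Fact (1 ≤ ENNReal.ofReal r)]
    (q : Sr (ENNReal.ofReal r)) (u v : ℕ) (huv : u ≠ v) (wu wv : ℝ)
    (h0u : 0 ≤ wu) (h0v : 0 ≤ wv) (hw : wu + wv = q.1 u + q.1 v) :
    ∃ q' : Sr (ENNReal.ofReal r), q'.1 u = wu ∧ q'.1 v = wv ∧
      (∀ j, j ≠ u → j ≠ v → q'.1 j = q.1 j) ∧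
      dist q' q ≤ |wu - q.1 u| + |wv - q.1 v| := by
  classical
  have hr0 : (0:ℝ) < r := lt_of_lt_of_le zero_lt_one hr
  have hR1 : 1 ≤ ENNReal.ofReal r := Fact.out
  have hpos : 0 < (ENNReal.ofReal r).toReal := by
    rw [ENNReal.toReal_ofReal hr0.le]; exact hr0
  set f : ℕ → ℝ := fun j =>
    q.1 j + ((if j = u then wu - q.1 u else 0) + (if j = v then wv - q.1 v else 0)) with hf
  have hfu : f u = wu := by simp [hf, huv]
  have hfv : f v = wv := by simp [hf, Ne.symm huv]
  have hfj : ∀ j, j ≠ u → j ≠ v → f j = q.1 j := by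
    intro j h1 h2; simp [hf, h1, h2]
  have h0 : ∀ j, 0 ≤ f j := by
    intro j
    rcases eq_or_ne j u with rfl | h1
    · rw [hfu]; exact h0u
    rcases eq_or_ne j v with rfl | h2
    · rw [hfv]; exact h0v
    · rw [hfj j h1 h2]; exact q.2.1 j
  have h1 : HasSum f 1 := by
    have := (q.2.2.add ((hasSum_ite_eq u (wu - q.1 u)).add (hasSum_ite_eq v (wv - q.1 v))))
    have he : 1 + ((wu - q.1 u) + (wv - q.1 v)) = 1 := by linarith
    rw [he] at this
    exact this
  refine ⟨mkS hR1 f h0 h1, hfu, hfv, hfj, ?_⟩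
  rw [Subtype.dist_eq, dist_eq_norm]
  have hcoe : ∀ j, ((mkS hR1 f h0 h1).1 : ∀ _ : ℕ, ℝ) j = f j := fun _ => rfl
  have heq : (mkS hR1 f h0 h1).1 - q.1 =
      lp.single (E := fun _ : ℕ => ℝ) (ENNReal.ofReal r) u (wu - q.1 u)
        + lp.single (E := fun _ : ℕ => ℝ) (ENNReal.ofReal r) v (wv - q.1 v) := by
    apply lp.ext
    funext j
    rw [lp.coeFn_sub, Pi.sub_apply, lp.coeFn_add, Pi.add_apply, hcoe]
    rcases eq_or_ne j u with rfl | hju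
    · rw [hfu, lp.single_apply_self (E := fun _ : ℕ => ℝ),
        lp.single_apply_ne (E := fun _ : ℕ => ℝ) _ _ _ huv]
      ring
    rcases eq_or_ne j v with rfl | hjv
    · rw [hfv, lp.single_apply_self (E := fun _ : ℕ => ℝ),
        lp.single_apply_ne (E := fun _ : ℕ => ℝ) _ _ _ (Ne.symm huv)]
      ring
    · rw [hfj j hju hjv, lp.single_apply_ne (E := fun _ : ℕ => ℝ) _ _ _ hju,
        lp.single_apply_ne (E := fun _ : ℕ => ℝ) _ _ _ hjv]
      ring
  have hA : ‖lp.single (E := fun _ : ℕ => ℝ) (ENNReal.ofReal r) u (wu - q.1 u)‖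
      = |wu - q.1 u| := by
    simpa [Real.norm_eq_abs] using lp.norm_single (E := fun _ : ℕ => ℝ) (zero_lt_one.trans_le hR1) u (wu - q.1 u)
  have hB : ‖lp.single (E := fun _ : ℕ => ℝ) (ENNReal.ofReal r) v (wv - q.1 v)‖
      = |wv - q.1 v| := by
    simpa [Real.norm_eq_abs] using lp.norm_single (E := fun _ : ℕ => ℝ) (zero_lt_one.trans_le hR1) v (wv - q.1 v)
  rw [heq]
  refine le_trans (norm_add_le _ _) ?_
  rw [hA, hB]

lemma summable_lp_one (f : lp (fun _ : ℕ => ℝ) 1) : Summable (fun i => f i) := by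
  have h : Summable fun i => ‖f i‖ ^ (1 : ℝ≥0∞).toReal := (lp.memℓp f).summable (by norm_num)
  refine Summable.of_abs ?_
  simpa [Real.rpow_one, Real.norm_eq_abs] using h

lemma isClosed_Sr_one : IsClosed (Sr 1) := by
  have h1 : IsClosed {q : lp (fun _ : ℕ => ℝ) 1 | ∀ i, 0 ≤ q i} := by
    have : {q : lp (fun _ : ℕ => ℝ) 1 | ∀ i, 0 ≤ q i} = ⋂ i, {q | 0 ≤ q i} := by
      ext q; simp [Set.mem_iInter]
    rw [this]
    exact isClosed_iInter fun i => isClosed_le continuous_const (continuous_eval i)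
  have hcont : Continuous fun q : lp (fun _ : ℕ => ℝ) 1 => ∑' i, q i := by
    have hL : LipschitzWith 1 fun q : lp (fun _ : ℕ => ℝ) 1 => ∑' i, q i := by
      apply LipschitzWith.of_dist_le_mul
      intro f g
      rw [NNReal.coe_one, one_mul, Real.dist_eq, dist_eq_norm, norm_lp_one]
      simp only [lp.coeFn_sub, Pi.sub_apply]
      have hs : Summable fun i => f i - g i := (summable_lp_one f).sub (summable_lp_one g)
      have hs2 : Summable fun i => ‖f i - g i‖ := by
        simpa [Real.norm_eq_abs] using hs.abs
      rw [← Summable.tsum_sub (summable_lp_one f) (summable_lp_one g)]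
      simpa [Real.norm_eq_abs] using norm_tsum_le_tsum_norm hs2
    exact hL.continuous
  have h2 : IsClosed {q : lp (fun _ : ℕ => ℝ) 1 | ∑' i, q i = 1} :=
    isClosed_eq hcont continuous_const
  have hset : Sr 1 = {q : lp (fun _ : ℕ => ℝ) 1 | ∀ i, 0 ≤ q i} ∩
      {q : lp (fun _ : ℕ => ℝ) 1 | ∑' i, q i = 1} := by
    ext q
    constructor
    · rintro ⟨ha, hb⟩; exact ⟨ha, hb.tsum_eq⟩
    · rintro ⟨ha, hb⟩; exact ⟨ha, hb ▸ (summable_lp_one q).hasSum⟩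
  rw [hset]
  exact h1.inter h2

lemma baireSpace_of_homeomorph {X Y : Type*} [TopologicalSpace X] [TopologicalSpace Y]
    [BaireSpace X] (e : X ≃ₜ Y) : BaireSpace Y := by
  constructor
  intro f ho hd
  have h1 : Dense (⋂ n, e ⁻¹' f n) := by
    refine dense_iInter_of_isOpen (fun n => (ho n).preimage e.continuous) (fun n => ?_)
    have : Dense (⇑e.symm '' f n) :=
      e.symm.surjective.denseRange.dense_image e.symm.continuous (hd n)
    rwa [Homeomorph.image_symm] at this
  have h2 : Dense (⇑e '' (e ⁻¹' ⋂ n, f n)) := by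
    refine e.surjective.denseRange.dense_image e.continuous ?_
    rwa [Set.preimage_iInter]
  rwa [Set.image_preimage_eq _ e.surjective] at h2

lemma tendsto_coords {P : ℝ≥0∞} [Fact (1 ≤ P)] {x : ℕ → Sr P} {a : Sr P}
    (hx : Tendsto x atTop (𝓝 a)) (i : ℕ) :
    Tendsto (fun n => (x n).1 i) atTop (𝓝 (a.1 i)) :=
  (((continuous_eval i).comp continuous_subtype_val).tendsto a).comp hx

lemma tendsto_l1_dist {P : ℝ≥0∞} [Fact (1 ≤ P)] {x : ℕ → Sr P} {a : Sr P}
    (hx : Tendsto x atTop (𝓝 a)) :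
    Tendsto (fun n => ∑' i, |(x n).1 i - a.1 i|) atTop (𝓝 0) :=
  scheffe (fun n i => (x n).2.1 i) (fun n => (x n).2.2) a.2.1 a.2.2
    (fun i => tendsto_coords hx i)

noncomputable def toSR (r : ℝ) (hr : 1 ≤ r) : Sr 1 → Sr (ENNReal.ofReal r) := fun q =>
  mkS (ENNReal.one_le_ofReal.mpr hr) (fun i => q.1 i) q.2.1 q.2.2

noncomputable def toS1 (r : ℝ) : Sr (ENNReal.ofReal r) → Sr 1 := fun q =>
  mkS le_rfl (fun i => q.1 i) q.2.1 q.2.2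

lemma continuous_toS1 (r : ℝ) [Fact (1 ≤ ENNReal.ofReal r)] : Continuous (toS1 r) := by
  apply SeqContinuous.continuous
  intro x a hx
  have hT := tendsto_l1_dist hx
  show Tendsto (fun n => toS1 r (x n)) atTop (𝓝 (toS1 r a))
  rw [tendsto_subtype_rng, tendsto_iff_dist_tendsto_zero]
  have hd : ∀ n, dist ((toS1 r (x n)).1) ((toS1 r a).1) = ∑' i, |(x n).1 i - a.1 i| := by
    intro n
    rw [dist_eq_norm, norm_lp_one]
    apply tsum_congr
    intro i
    rw [lp.coeFn_sub, Pi.sub_apply]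
    rfl
  simpa only [hd] using hT

lemma continuous_toSR (r : ℝ) (hr : 1 ≤ r) [Fact (1 ≤ ENNReal.ofReal r)] :
    Continuous (toSR r hr) := by
  apply SeqContinuous.continuous
  intro x a hx
  have hT := tendsto_l1_dist hx
  show Tendsto (fun n => toSR r hr (x n)) atTop (𝓝 (toSR r hr a))
  rw [tendsto_subtype_rng, tendsto_iff_dist_tendsto_zero]
  have hg : Tendsto (fun n => (∑' i, |(x n).1 i - a.1 i|) ^ (1/r)) atTop (𝓝 0) := by
    have hr0 : (0:ℝ) < r := lt_of_lt_of_le zero_lt_one hr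
    have h := hT.rpow_const (p := 1/r) (Or.inr (by positivity))
    rw [Real.zero_rpow (by positivity : (1:ℝ)/r ≠ 0)] at h
    exact h
  refine squeeze_zero (fun n => dist_nonneg) (fun n => ?_) hg
  rw [dist_eq_norm]
  have hb : ∀ i, |(toSR r hr (x n)).1 i - (toSR r hr a).1 i| ≤ 1 := by
    intro i
    have h1 : (x n).1 i ≤ 1 := le_one_of_S (x n).2.1 (x n).2.2 i
    have h2 : a.1 i ≤ 1 := le_one_of_S a.2.1 a.2.2 i
    have h3 : 0 ≤ (x n).1 i := (x n).2.1 i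
    have h4 : 0 ≤ a.1 i := a.2.1 i
    rw [abs_sub_le_iff]
    constructor
    · show (x n).1 i - a.1 i ≤ 1; linarith
    · show a.1 i - (x n).1 i ≤ 1; linarith
  have hs : Summable fun i => |(toSR r hr (x n)).1 i - (toSR r hr a).1 i| := by
    have : Summable fun i => (x n).1 i - a.1 i :=
      ((x n).2.2.summable).sub (a.2.2.summable)
    exact this.abs
  exact norm_le_rpow hr _ _ hb hs

/-- The identity map `Sr 1 ≃ₜ Sr (ofReal r)` is a homeomorphism. -/
noncomputable def homeoS (r : ℝ) (hr : 1 ≤ r) [Fact (1 ≤ ENNReal.ofReal r)] :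
    (Sr 1) ≃ₜ (Sr (ENNReal.ofReal r)) where
  toFun := toSR r hr
  invFun := toS1 r
  left_inv _ := Subtype.ext (lp.ext rfl)
  right_inv _ := Subtype.ext (lp.ext rfl)
  continuous_toFun := continuous_toSR r hr
  continuous_invFun := continuous_toS1 r

end BayesAux

open BayesAux

/-- Let `r` be a real number with `1 ≤ r`.  For every probability
distribution `p` on `ℕ` with all components positive, in the ℓʳ-subspace topology on the
set `S` of probability distributions, the Bayes blind spot `BS(p)` is of second Baire
category in `S`, is dense in `S`, and has empty interior in `S`. -/
theorem bayes_blind_spot_lp_topologies (r : ℝ) (hr : 1 ≤ r)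
    [Fact (1 ≤ ENNReal.ofReal r)]
    (p : ℕ → ℝ) (hpos : ∀ i, 0 < p i) (hsum : HasSum p 1) :
    ¬ IsMeagre (BSr (ENNReal.ofReal r) p) ∧
      Dense (BSr (ENNReal.ofReal r) p) ∧
      interior (BSr (ENNReal.ofReal r) p) = ∅ := by
  classical
  have hR1 : 1 ≤ ENNReal.ofReal r := Fact.out
  haveI : CompleteSpace ↥(Sr 1) := isClosed_Sr_one.completeSpace_coe
  haveI : BaireSpace ↥(Sr (ENNReal.ofReal r)) := baireSpace_of_homeomorph (homeoS r hr)
  haveI : Nonempty ↥(Sr (ENNReal.ofReal r)) := ⟨mkS hR1 p (fun i => (hpos i).le) hsum⟩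
  set C : ℕ → ℕ → Set ↥(Sr (ENNReal.ofReal r)) :=
    fun a b => {q | q.1 a * p b = q.1 b * p a} with hCdef
  have hC_closed : ∀ a b, IsClosed (C a b) := by
    intro a b
    apply isClosed_eq
    · exact ((continuous_eval a).comp continuous_subtype_val).mul continuous_const
    · exact ((continuous_eval b).comp continuous_subtype_val).mul continuous_const
  -- every `C a b` with `a ≠ b` has dense complement
  have hC_dense : ∀ a b, a ≠ b → Dense (C a b)ᶜ := by
    intro a b hab
    rw [Metric.dense_iff]
    intro x ε hε
    by_cases hx : x ∈ C a b
    · -- perturb x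
      have hk : ∃ k, x.1 k ≠ 0 := by
        by_contra h
        push_neg at h
        have h0 : (fun i => x.1 i) = fun _ => (0:ℝ) := funext h
        have hx2 := x.2.2
        rw [h0] at hx2
        exact one_ne_zero (hasSum_zero.unique hx2).symm
      obtain ⟨k, hk⟩ := hk
      have hk0 : 0 < x.1 k := lt_of_le_of_ne (x.2.1 k) (Ne.symm hk)
      set δ : ℝ := min (ε/3) (x.1 k) with hδdef
      have hδ : 0 < δ := lt_min (by linarith) hk0
      have hδε : δ ≤ ε/3 := min_le_left _ _
      have hδk : δ ≤ x.1 k := min_le_right _ _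
      have hxC : x.1 a * p b = x.1 b * p a := hx
      have hpa := hpos a
      have hpb := hpos b
      by_cases hka : k = a
      · subst hka
        obtain ⟨q', hqu, hqv, _, hdist⟩ := surgery hr x k b hab (x.1 k - δ) (x.1 b + δ)
          (by linarith) (by have := x.2.1 b; linarith) (by ring)
        refine ⟨q', ?_, ?_⟩
        · rw [mem_ball]
          calc dist q' x ≤ |x.1 k - δ - x.1 k| + |x.1 b + δ - x.1 b| := hdist
            _ = 2 * δ := by rw [show x.1 k - δ - x.1 k = -δ by ring,
                show x.1 b + δ - x.1 b = δ by ring, abs_neg, abs_of_pos hδ]; ring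
            _ < ε := by linarith
        · intro hmem
          have hthis : q'.1 k * p b = q'.1 b * p k := hmem
          rw [hqu, hqv] at hthis
          nlinarith
      · by_cases hkb : k = b
        · subst hkb
          obtain ⟨q', hqu, hqv, _, hdist⟩ := surgery hr x k a (Ne.symm hab) (x.1 k - δ)
            (x.1 a + δ) (by linarith) (by have := x.2.1 a; linarith) (by ring)
          refine ⟨q', ?_, ?_⟩
          · rw [mem_ball]
            calc dist q' x ≤ |x.1 k - δ - x.1 k| + |x.1 a + δ - x.1 a| := hdist
              _ = 2 * δ := by rw [show x.1 k - δ - x.1 k = -δ by ring,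
                  show x.1 a + δ - x.1 a = δ by ring, abs_neg, abs_of_pos hδ]; ring
              _ < ε := by linarith
          · intro hmem
            have hthis : q'.1 a * p k = q'.1 k * p a := hmem
            rw [hqu, hqv] at hthis
            nlinarith
        · obtain ⟨q', hqu, hqv, hqj, hdist⟩ := surgery hr x k a hka (x.1 k - δ)
            (x.1 a + δ) (by linarith) (by have := x.2.1 a; linarith) (by ring)
          refine ⟨q', ?_, ?_⟩
          · rw [mem_ball]
            calc dist q' x ≤ |x.1 k - δ - x.1 k| + |x.1 a + δ - x.1 a| := hdist
              _ = 2 * δ := by rw [show x.1 k - δ - x.1 k = -δ by ring,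
                  show x.1 a + δ - x.1 a = δ by ring, abs_neg, abs_of_pos hδ]; ring
              _ < ε := by linarith
          · intro hmem
            have hqb : q'.1 b = x.1 b := hqj b (Ne.symm hkb) (Ne.symm hab)
            have : q'.1 a * p b = q'.1 b * p a := hmem
            rw [hqv, hqb] at this
            nlinarith
    · exact ⟨x, mem_ball_self hε, hx⟩
  -- the complement of the blind spot is meagre
  have hmeagre : IsMeagre ((BSr (ENNReal.ofReal r) p)ᶜ) := by
    set e : ℕ ≃ ℕ × ℕ := (Denumerable.eqv (ℕ × ℕ)).symm with hedef
    set D : ℕ → Set ↥(Sr (ENNReal.ofReal r)) :=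
      fun n => if (e n).1 = (e n).2 then ∅ else C (e n).1 (e n).2 with hDdef
    have hsub : (BSr (ENNReal.ofReal r) p)ᶜ ⊆ ⋃ n, D n := by
      intro q hq
      rw [Set.mem_compl_iff] at hq
      have hni : ¬ Function.Injective fun i => q.1 i / p i := hq
      rw [Function.not_injective_iff] at hni
      obtain ⟨i, j, hij, hne⟩ := hni
      refine Set.mem_iUnion.mpr ⟨e.symm (i, j), ?_⟩
      have he : e (e.symm (i,j)) = (i,j) := e.apply_symm_apply _
      have hD : D (e.symm (i,j)) = C i j := by
        rw [hDdef]
        simp only [he]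
        rw [if_neg hne]
      rw [hD]
      exact (div_eq_div_iff (hpos i).ne' (hpos j).ne').mp hij
    refine (isMeagre_iUnion ?_).mono hsub
    intro n
    by_cases h : (e n).1 = (e n).2
    · simp only [hDdef, if_pos h]
      exact IsMeagre.empty
    · have hmC : IsMeagre (C (e n).1 (e n).2) := by
        rw [IsMeagre]
        exact residual_of_dense_open (hC_closed _ _).isOpen_compl (hC_dense _ _ h)
      simpa only [hDdef, if_neg h] using hmC
  have hres : BSr (ENNReal.ofReal r) p ∈ residual ↥(Sr (ENNReal.ofReal r)) := by
    rwa [IsMeagre, compl_compl] at hmeagre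
  refine ⟨?_, dense_of_mem_residual hres, ?_⟩
  · intro hmea
    have h1 : BSr (ENNReal.ofReal r) p ∩ (BSr (ENNReal.ofReal r) p)ᶜ ∈
        residual ↥(Sr (ENNReal.ofReal r)) := Filter.inter_mem hres hmea
    rw [Set.inter_compl_self] at h1
    exact Set.not_nonempty_empty ((dense_of_mem_residual h1).nonempty)
  · -- empty interior: the complement is dense
    rw [interior_eq_empty_iff_dense_compl, Metric.dense_iff]
    intro x ε hε
    have hsx : Summable (fun i => x.1 i) := x.2.2.summable
    have htend : Tendsto (fun i => x.1 i) atTop (𝓝 0) := hsx.tendsto_atTop_zero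
    obtain ⟨N, hN⟩ := (Metric.tendsto_atTop.mp htend) (ε/8) (by linarith)
    set a := N with hadef
    set b := N + 1 with hbdef
    have hab : a ≠ b := by omega
    have hxa : x.1 a < ε/8 := by
      have := hN a (le_refl _)
      rwa [Real.dist_eq, sub_zero, abs_of_nonneg (x.2.1 a)] at this
    have hxb : x.1 b < ε/8 := by
      have := hN b (by omega)
      rwa [Real.dist_eq, sub_zero, abs_of_nonneg (x.2.1 b)] at this
    have hpa := hpos a
    have hpb := hpos b
    have hpab : 0 < p a + p b := by linarith
    set s : ℝ := x.1 a + x.1 b with hsdef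
    have hs0 : 0 ≤ s := add_nonneg (x.2.1 a) (x.2.1 b)
    set wu : ℝ := s * p a / (p a + p b) with hwudef
    set wv : ℝ := s * p b / (p a + p b) with hwvdef
    have hwu0 : 0 ≤ wu := div_nonneg (mul_nonneg hs0 hpa.le) hpab.le
    have hwv0 : 0 ≤ wv := div_nonneg (mul_nonneg hs0 hpb.le) hpab.le
    have hwus : wu ≤ s := by
      rw [hwudef, div_le_iff₀ hpab]
      nlinarith
    have hwvs : wv ≤ s := by
      rw [hwvdef, div_le_iff₀ hpab]
      nlinarith
    have hw : wu + wv = x.1 a + x.1 b := by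
      rw [hwudef, hwvdef]
      field_simp
      ring
    obtain ⟨q', hqu, hqv, _, hdist⟩ := surgery hr x a b hab wu wv hwu0 hwv0 hw
    refine ⟨q', ?_, ?_⟩
    · rw [mem_ball]
      have h1 : |wu - x.1 a| ≤ s := by
        rw [abs_sub_le_iff]
        constructor
        · have : 0 ≤ x.1 a := x.2.1 a; linarith
        · have : x.1 a ≤ s := by rw [hsdef]; have := x.2.1 b; linarith
          linarith
      have h2 : |wv - x.1 b| ≤ s := by
        rw [abs_sub_le_iff]
        constructor
        · have : 0 ≤ x.1 b := x.2.1 b; linarith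
        · have : x.1 b ≤ s := by rw [hsdef]; have := x.2.1 a; linarith
          linarith
      have hsε : s < ε/4 := by rw [hsdef]; linarith
      calc dist q' x ≤ |wu - x.1 a| + |wv - x.1 b| := hdist
        _ ≤ s + s := add_le_add h1 h2
        _ < ε := by linarith
    · intro hmem
      have hinj : Function.Injective fun i => q'.1 i / p i := hmem
      have heq : q'.1 a / p a = q'.1 b / p b := by
        rw [hqu, hqv, hwudef, hwvdef]
        field_simp
      exact hab (hinj heq)
end
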